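/- Let (η_n) ⊂ (0,1) be a sequence such that (η_n)_{n ≥ m'} is decreasing with η_n → 0, (η_{n+1}^{-1/2} - η_n^{-1/2})_{n ≥ m'} is decreasing, and ∑ η_n = ∞. Then the sequence of ratios (η_{n+1}/η_n)_{n ≥ m'} is increasing and converges to 1. -/

import Mathlib

/-- If `(η n) ⊂ (0,1)` is decreasing to zero from index `m'`, with
`(η (n+1) ^ (-1/2) - η n ^ (-1/2))` decreasing from `m'`, and `∑ η n = ∞`,
then the ratios `η (n+1) / η n` form an increasing sequence (from `m'`)
converging to `1`. -/
theorem adapt_weight_ratio (η : ℕ → ℝ) (m' : ℕ)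
    (hη : ∀ n, 0 < η n ∧ η n < 1)
    (hdec : ∀ n ≥ m', η (n + 1) ≤ η n)
    (hlim : Filter.Tendsto η Filter.atTop (nhds 0))
    (hdiffdec : ∀ n ≥ m',
      η (n + 2) ^ (-(1/2 : ℝ)) - η (n + 1) ^ (-(1/2 : ℝ))
        ≤ η (n + 1) ^ (-(1/2 : ℝ)) - η n ^ (-(1/2 : ℝ)))
    (hdiv : ¬ Summable η) :
    (∀ n ≥ m', η (n + 1) / η n ≤ η (n + 2) / η (n + 1)) ∧
      Filter.Tendsto (fun n => η (n + 1) / η n) Filter.atTop (nhds 1) := by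
  have hηpos : ∀ n, 0 < η n := fun n => (hη n).1
  set a : ℕ → ℝ := fun n => (Real.sqrt (η n))⁻¹ with ha_def
  have hs : ∀ n, 0 < Real.sqrt (η n) := fun n => Real.sqrt_pos.2 (hηpos n)
  have hapos : ∀ n, 0 < a n := fun n => inv_pos.2 (hs n)
  have hrpow : ∀ n, η n ^ (-(1/2 : ℝ)) = a n := by
    intro n
    rw [Real.rpow_neg (hηpos n).le]
    simp only [ha_def]
    rw [← Real.sqrt_eq_rpow]
  have hratio : ∀ n, η (n+1) / η n = (a n / a (n+1))^2 := by
    intro n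
    simp only [ha_def]
    rw [div_pow, inv_pow, inv_pow, Real.sq_sqrt (hηpos n).le,
      Real.sq_sqrt (hηpos (n+1)).le, inv_div_inv]
  have hd : ∀ n ≥ m', a (n+2) - a (n+1) ≤ a (n+1) - a n := by
    intro n hn
    have := hdiffdec n hn
    rwa [hrpow, hrpow, hrpow] at this
  have hmono_a : ∀ n ≥ m', a n ≤ a (n+1) := by
    intro n hn
    exact inv_anti₀ (hs (n+1)) (Real.sqrt_le_sqrt (hdec n hn))
  set D : ℝ := a (m'+1) - a m' with hD_def
  have hD0 : 0 ≤ D := by have := hmono_a m' le_rfl; simp [hD_def]; linarith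
  have hdbound : ∀ n ≥ m', a (n+1) - a n ≤ D := by
    intro n hn
    induction n, hn using Nat.le_induction with
    | base => exact le_refl _
    | succ n hn ih => exact le_trans (hd n hn) ih
  constructor
  · intro n hn
    rw [hratio, hratio]
    have h1 := hd n hn
    have key : a n * a (n+2) ≤ a (n+1) * a (n+1) := by
      nlinarith [sq_nonneg (a n - a (n+2)), (hapos n), (hapos (n+2))]
    have hdivle : a n / a (n+1) ≤ a (n+1) / a (n+2) := by
      rw [div_le_div_iff₀ (hapos (n+1)) (hapos (n+2))]
      nlinarith
    exact pow_le_pow_left₀ (by positivity) hdivle 2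
  · have hsqrt0 : Filter.Tendsto (fun n => Real.sqrt (η n)) Filter.atTop (nhdsWithin 0 (Set.Ioi 0)) := by
      apply tendsto_nhdsWithin_of_tendsto_nhds_of_eventually_within
      · have := (Real.continuous_sqrt.tendsto 0).comp hlim
        simpa [Function.comp_def] using this
      · exact Filter.Eventually.of_forall fun n => hs n
    have ha_top : Filter.Tendsto a Filter.atTop Filter.atTop := hsqrt0.inv_tendsto_nhdsGT_zero
    have haD_top : Filter.Tendsto (fun n => a n + D) Filter.atTop Filter.atTop :=
      Filter.tendsto_atTop_add_const_right _ D ha_top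
    have hfrac0 : Filter.Tendsto (fun n => D / (a n + D)) Filter.atTop (nhds 0) :=
      Filter.Tendsto.div_atTop tendsto_const_nhds haD_top
    have hg : Filter.Tendsto (fun n => (1 - D / (a n + D))^2) Filter.atTop (nhds 1) := by
      have h1 : Filter.Tendsto (fun n => 1 - D / (a n + D)) Filter.atTop (nhds (1 - 0)) :=
        Filter.Tendsto.sub (tendsto_const_nhds (x := (1:ℝ))) hfrac0
      have h2 := h1.pow 2
      simpa using h2
    apply tendsto_of_tendsto_of_tendsto_of_le_of_le' hg tendsto_const_nhds
    · filter_upwards [Filter.eventually_ge_atTop m'] with n hn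
      rw [hratio]
      have hle : a (n+1) ≤ a n + D := by have := hdbound n hn; linarith
      have hpos : 0 < a n + D := by have := hapos n; linarith
      have heq : 1 - D / (a n + D) = a n / (a n + D) := by
        field_simp
        ring
      rw [heq]
      exact pow_le_pow_left₀ (div_nonneg (hapos n).le hpos.le)
        (div_le_div_of_nonneg_left (hapos n).le (hapos (n+1)) hle) 2
    · filter_upwards [Filter.eventually_ge_atTop m'] with n hn
      exact (div_le_one (hηpos n)).2 (hdec n hn)
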